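/- For every integer n ≥ 0, in the ring R_{n+1} one has Φ_n(x_{n+1}; x_1,…,x_n) = (∏_{i=1}^{n} (x_i + ε)^{2^{i−1}}) · x_{n+1}. -/

import Mathlib

open MvPolynomial

/-- `Φ n x₀ x = ∏_{I ⊆ {1,…,n}} (x₀ + ∑_{i ∈ I} x i)`. -/
def Phi {R : Type*} [CommRing R] (n : ℕ) (x0 : R) (x : ℕ → R) : R :=
  ∏ I ∈ (Finset.Icc 1 n).powerset, (x0 + ∑ i ∈ I, x i)

/-- The ideal `I_m ⊆ 𝔽₂[x₁,…,x_m,ε]` generated by `x_j² − ε·x_j` for `j = 1,…,m`.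
The variables are indexed by `Fin (m+1)`: index `0` is `ε` and index `j ≠ 0` is `x_j`. -/
noncomputable def relIdeal (m : ℕ) : Ideal (MvPolynomial (Fin (m + 1)) (ZMod 2)) :=
  Ideal.span {f : MvPolynomial (Fin (m + 1)) (ZMod 2) |
    ∃ j : Fin (m + 1), j ≠ 0 ∧ f = X j ^ 2 - X 0 * X j}

/-- The ring `R_m = 𝔽₂[x₁,…,x_m,ε]/I_m`. -/
abbrev Rring (m : ℕ) := MvPolynomial (Fin (m + 1)) (ZMod 2) ⧸ relIdeal m

/-- The image of the variable `x_j` (for `1 ≤ j ≤ m`) in `R_m`. -/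
noncomputable def xv (m : ℕ) (j : ℕ) : Rring m :=
  Ideal.Quotient.mk (relIdeal m) (X (Fin.ofNat (m + 1) j))

/-- The image of the variable `ε` in `R_m`. -/
noncomputable def eps (m : ℕ) : Rring m :=
  Ideal.Quotient.mk (relIdeal m) (X 0)

lemma sqsum {R : Type*} [CommRing R] (h2 : (2:R) = 0) (ε x0 : R) (x : ℕ → R) (I : Finset ℕ)
    (h0 : x0^2 = ε*x0) (hx : ∀ i ∈ I, x i ^2 = ε * x i) :
    (x0 + ∑ i ∈ I, x i)^2 = ε * (x0 + ∑ i ∈ I, x i) := by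
  induction I using Finset.induction with
  | empty => simpa using h0
  | @insert a s ha ih =>
    rw [Finset.sum_insert ha]
    have h1 := hx a (Finset.mem_insert_self _ _)
    have h2' := ih (fun i hi => hx i (Finset.mem_insert_of_mem hi))
    linear_combination h2' + h1 + (x0 + ∑ i ∈ s, x i) * x a * h2

lemma key {R : Type*} [CommRing R] (h2 : (2:R)=0) (ε : R) (x : ℕ → R) (n : ℕ) (x0 : R)
    (h0 : x0^2 = ε*x0) (hx : ∀ i ∈ Finset.Icc 1 n, x i ^2 = ε*x i) :
    Phi n x0 x = (∏ i ∈ Finset.Icc 1 n, (x i + ε)^(2^(i-1))) * x0 := by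
  induction n with
  | zero => simp [Phi]
  | succ n ih =>
    have hins : Finset.Icc 1 (n+1) = insert (n+1) (Finset.Icc 1 n) := by
      ext i; simp [Finset.mem_Icc]; omega
    have hna : (n+1) ∉ Finset.Icc 1 n := by simp
    have step : ∀ I ∈ (Finset.Icc 1 n).powerset,
        (x0 + ∑ i ∈ I, x i) * (x0 + ∑ i ∈ insert (n+1) I, x i)
          = (x (n+1) + ε) * (x0 + ∑ i ∈ I, x i) := by
      intro I hI
      have hIn : (n+1) ∉ I := fun h => hna (Finset.mem_powerset.mp hI h)
      rw [Finset.sum_insert hIn]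
      have hy : (x0 + ∑ i ∈ I, x i)^2 = ε * (x0 + ∑ i ∈ I, x i) :=
        sqsum h2 ε x0 x I h0 (fun i hi => hx i (by
          have := Finset.mem_powerset.mp hI hi
          simp only [Finset.mem_Icc] at this ⊢; omega))
      linear_combination hy
    have ih' := ih (fun i hi => hx i (by rw [hins]; exact Finset.mem_insert_of_mem hi))
    unfold Phi at ih' ⊢
    rw [hins, Finset.prod_powerset_insert hna, ← Finset.prod_mul_distrib,
      Finset.prod_congr rfl step, Finset.prod_mul_distrib, Finset.prod_const,
      Finset.card_powerset, Nat.card_Icc, ih', Finset.prod_insert hna]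
    simp only [Nat.add_sub_cancel]
    ring

/-- For every `n ≥ 0`, in `R_{n+1}` one has
`Φ_n(x_{n+1}; x₁,…,xₙ) = (∏_{i=1}^{n} (xᵢ + ε)^{2^{i−1}}) · x_{n+1}`. -/
theorem stmt10 (n : ℕ) :
    Phi n (xv (n + 1) (n + 1)) (xv (n + 1))
      = (∏ i ∈ Finset.Icc 1 n, (xv (n + 1) i + eps (n + 1)) ^ (2 ^ (i - 1)))
          * xv (n + 1) (n + 1) := by
  have h2 : (2 : Rring (n + 1)) = 0 := by
    have hp : (2 : MvPolynomial (Fin (n + 2)) (ZMod 2)) = 0 := by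
      have : (2 : MvPolynomial (Fin (n + 2)) (ZMod 2)) = C (2 : ZMod 2) := by
        simp [map_ofNat]
      rw [this, show (2 : ZMod 2) = 0 from rfl, map_zero]
    calc (2 : Rring (n + 1))
        = Ideal.Quotient.mk (relIdeal (n + 1)) 2 := by rw [map_ofNat]
      _ = 0 := by rw [hp, map_zero]
  have hrel : ∀ j : ℕ, 1 ≤ j → j ≤ n + 1 →
      xv (n + 1) j ^ 2 = eps (n + 1) * xv (n + 1) j := by
    intro j hj1 hj2
    unfold xv eps
    rw [← map_pow, ← map_mul, Ideal.Quotient.eq]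
    apply Ideal.subset_span
    refine ⟨Fin.ofNat (n + 2) j, ?_, rfl⟩
    intro h
    simp only [Fin.ext_iff, Fin.val_ofNat, Fin.val_zero] at h
    rw [Nat.mod_eq_of_lt (by omega)] at h
    omega
  exact key h2 (eps (n + 1)) (xv (n + 1)) n (xv (n + 1) (n + 1))
    (hrel (n + 1) (by omega) le_rfl)
    (fun i hi => by
      simp only [Finset.mem_Icc] at hi
      exact hrel i hi.1 (by omega))
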